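/- The set of almost quantum distributions is closed under composition: if P_A is an n_A-partite almost quantum distribution and P_B is an n_B-partite almost quantum distribution, then the product distribution (ā,b̄ | x̄,ȳ) ↦ P_A(ā|x̄)·P_B(b̄|ȳ) is an (n_A+n_B)-partite almost quantum distribution. -/

import Mathlib

/-- Ordered product of operators applied to a vector. -/
def seqApply {H : Type*} [AddCommMonoid H] [Module ℂ H] {n : ℕ}
    (T : Fin n → (H →ₗ[ℂ] H)) (v : H) : H :=
  (List.ofFn T).foldr (fun f w => f w) v

/-- An almost quantum representation of an `n`-partite distribution `P`. -/
structure AQRep {n : ℕ} {A X : Type*} [Fintype A]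
    (P : (Fin n → A) → (Fin n → X) → ℝ) where
  H : Type
  [instN : NormedAddCommGroup H]
  [instI : InnerProductSpace ℂ H]
  φ : H
  E : Fin n → A → X → (H →ₗ[ℂ] H)
  norm_φ : ‖φ‖ = 1
  idem : ∀ k a x, E k a x ∘ₗ E k a x = E k a x
  selfAdj : ∀ k a x (v w : H), (inner ℂ ((E k a x) v) w : ℂ) = inner ℂ v ((E k a x) w)
  complete : ∀ k x, ∑ a, E k a x = (LinearMap.id : H →ₗ[ℂ] H)
  perm : ∀ (a : Fin n → A) (x : Fin n → X) (π : Equiv.Perm (Fin n)),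
    seqApply (fun i => E (π i) (a (π i)) (x (π i))) φ = seqApply (fun i => E i (a i) (x i)) φ
  prob : ∀ a x, (P a x : ℂ) = inner ℂ φ (seqApply (fun i => E i (a i) (x i)) φ)

/-- `P` is almost quantum iff it admits an almost quantum representation. -/
def IsAlmostQuantum {n : ℕ} {A X : Type*} [Fintype A]
    (P : (Fin n → A) → (Fin n → X) → ℝ) : Prop :=
  Nonempty (AQRep P)

/-! ### Auxiliary: inner ℂ product on the algebraic tensor product of two
complex inner ℂ product spaces. -/

open scoped TensorProduct
open TensorProduct

noncomputable section AQTensor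

variable {HA HB : Type} [NormedAddCommGroup HA] [InnerProductSpace ℂ HA]
  [NormedAddCommGroup HB] [InnerProductSpace ℂ HB]

/-- inner ℂ on pure tensors, linear in second argument. -/
def innerTmulAux (u : HA) (v : HB) : (HA ⊗[ℂ] HB) →ₗ[ℂ] ℂ :=
  TensorProduct.lift (LinearMap.mk₂ ℂ (fun u' v' => (inner ℂ u u' : ℂ) * (inner ℂ v v' : ℂ))
    (fun a b c => by simp only [inner_add_right]; ring)
    (fun c a b => by simp only [inner_smul_right, smul_eq_mul]; ring)
    (fun a b c => by simp only [inner_add_right]; ring)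
    (fun c a b => by simp only [inner_smul_right, smul_eq_mul]; ring))

@[simp] lemma innerTmulAux_tmul (u : HA) (v : HB) (u' : HA) (v' : HB) :
    innerTmulAux u v (u' ⊗ₜ[ℂ] v') = (inner ℂ u u' : ℂ) * (inner ℂ v v' : ℂ) := rfl

lemma innerTmulAux_add_left (u₁ u₂ : HA) (v : HB) :
    innerTmulAux (u₁ + u₂) v = innerTmulAux u₁ v + innerTmulAux u₂ v := by
  apply TensorProduct.ext'
  intro u' v'
  simp [inner_add_left]; ring

lemma innerTmulAux_add_right (u : HA) (v₁ v₂ : HB) :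
    innerTmulAux u (v₁ + v₂) = innerTmulAux u v₁ + innerTmulAux u v₂ := by
  apply TensorProduct.ext'
  intro u' v'
  simp [inner_add_left]; ring

lemma innerTmulAux_smul_left (c : ℂ) (u : HA) (v : HB) :
    innerTmulAux (c • u) v = (starRingEnd ℂ c) • innerTmulAux u v := by
  apply TensorProduct.ext'
  intro u' v'
  simp [inner_smul_left]; ring

lemma innerTmulAux_smul_right (c : ℂ) (u : HA) (v : HB) :
    innerTmulAux u (c • v) = (starRingEnd ℂ c) • innerTmulAux u v := by
  apply TensorProduct.ext'
  intro u' v'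
  simp [inner_smul_left]; ring

/-- The sesquilinear form on the tensor product, as an additive lift. -/
def tensorInner : (HA ⊗[ℂ] HB) →+ ((HA ⊗[ℂ] HB) →ₗ[ℂ] ℂ) :=
  TensorProduct.liftAddHom
    (AddMonoidHom.mk' (fun u => AddMonoidHom.mk'
        (fun v => innerTmulAux u v) (fun v₁ v₂ => innerTmulAux_add_right u v₁ v₂))
      (fun u₁ u₂ => by ext v : 1; exact innerTmulAux_add_left u₁ u₂ v))
    (fun c u v => by
      show innerTmulAux (c • u) v = innerTmulAux u (c • v)
      rw [innerTmulAux_smul_left, innerTmulAux_smul_right])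

@[simp] lemma tensorInner_tmul (u : HA) (v : HB) (u' : HA) (v' : HB) :
    tensorInner (u ⊗ₜ[ℂ] v) (u' ⊗ₜ[ℂ] v') = (inner ℂ u u' : ℂ) * (inner ℂ v v' : ℂ) := rfl

lemma tensorInner_add_left (x y z : HA ⊗[ℂ] HB) :
    tensorInner (x + y) z = tensorInner x z + tensorInner y z := by
  rw [map_add]; rfl

lemma tensorInner_smul_left (c : ℂ) (x y : HA ⊗[ℂ] HB) :
    tensorInner (c • x) y = (starRingEnd ℂ c) * tensorInner x y := by
  induction x using TensorProduct.induction_on with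
  | zero => simp
  | tmul u v =>
      rw [TensorProduct.smul_tmul']
      show innerTmulAux (c • u) v y = _
      rw [innerTmulAux_smul_left]
      rfl
  | add x₁ x₂ h1 h2 =>
      rw [smul_add, tensorInner_add_left, h1, h2, tensorInner_add_left]
      ring

lemma tensorInner_conj_symm (x y : HA ⊗[ℂ] HB) :
    (starRingEnd ℂ) (tensorInner y x) = tensorInner x y := by
  induction x using TensorProduct.induction_on with
  | zero => simp
  | tmul u v =>
      induction y using TensorProduct.induction_on with
      | zero => simp
      | tmul u' v' =>
          rw [tensorInner_tmul, tensorInner_tmul, map_mul, inner_conj_symm, inner_conj_symm]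
      | add y₁ y₂ h1 h2 => rw [tensorInner_add_left, map_add, map_add, h1, h2]
  | add x₁ x₂ h1 h2 =>
      rw [tensorInner_add_left, map_add, map_add, h1, h2]

/-- Decomposition of a tensor with orthonormal right legs. -/
lemma tensor_decomp (x : HA ⊗[ℂ] HB) :
    ∃ (m : ℕ) (w : Fin m → HA) (e : Fin m → HB), Orthonormal ℂ e ∧
      x = ∑ j, w j ⊗ₜ[ℂ] e j := by
  obtain ⟨S, rfl⟩ := TensorProduct.exists_finset x
  set V : Submodule ℂ HB := Submodule.span ℂ (Set.image Prod.snd (S : Set (HA × HB))) with hV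
  have hfd : FiniteDimensional ℂ V := by
    apply FiniteDimensional.span_of_finite
    exact (S.finite_toSet.image _)
  set m := Module.finrank ℂ V
  let b : OrthonormalBasis (Fin m) ℂ V := stdOrthonormalBasis ℂ V
  refine ⟨m, fun j => ∑ p ∈ S, (inner ℂ ((b j : HB)) p.2 : ℂ) • p.1, fun j => (b j : HB), ?_, ?_⟩
  · constructor
    · intro j; rw [Submodule.norm_coe]; exact b.orthonormal.1 j
    · intro i j hij
      rw [← Submodule.coe_inner]; exact b.orthonormal.2 hij
  · simp only [sum_tmul]
    rw [Finset.sum_comm]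
    apply Finset.sum_congr rfl
    intro p hp
    have hmem : p.2 ∈ V := Submodule.subset_span ⟨p, hp, rfl⟩
    have hrepr : (p.2 : HB) = ∑ j, (inner ℂ ((b j : HB)) p.2 : ℂ) • (b j : HB) := by
      have h1 := b.sum_repr ⟨p.2, hmem⟩
      have h2 : ∀ j, b.repr ⟨p.2, hmem⟩ j = (inner ℂ ((b j : HB)) p.2 : ℂ) := by
        intro j
        rw [b.repr_apply_apply]
        rfl
      calc (p.2 : HB) = ((⟨p.2, hmem⟩ : V) : HB) := rfl
        _ = ((∑ j, b.repr ⟨p.2, hmem⟩ j • b j : V) : HB) := by rw [h1]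
        _ = ∑ j, b.repr ⟨p.2, hmem⟩ j • (b j : HB) := by push_cast; rfl
        _ = ∑ j, (inner ℂ ((b j : HB)) p.2 : ℂ) • (b j : HB) := by simp_rw [h2]
    conv_lhs => rw [hrepr]
    rw [tmul_sum]
    apply Finset.sum_congr rfl
    intro j _
    rw [tmul_smul, TensorProduct.smul_tmul']

lemma tensorInner_self (x : HA ⊗[ℂ] HB) :
    ∃ (m : ℕ) (w : Fin m → HA) (e : Fin m → HB),
      x = ∑ j, w j ⊗ₜ[ℂ] e j ∧ tensorInner x x = ((∑ j, ‖w j‖^2 : ℝ) : ℂ) := by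
  obtain ⟨m, w, e, he, hx⟩ := tensor_decomp x
  refine ⟨m, w, e, hx, ?_⟩
  rw [hx, map_sum]
  simp only [LinearMap.coe_sum, Finset.sum_apply, map_sum, tensorInner_tmul,
    orthonormal_iff_ite.mp he, mul_ite, mul_one, mul_zero]
  rw [Finset.sum_congr rfl (fun j _ => Finset.sum_ite_eq' Finset.univ j _)]
  push_cast
  simp [inner_self_eq_norm_sq_to_K]

/-- The inner ℂ product space core structure on the tensor product. -/
def tensorCore : InnerProductSpace.Core ℂ (HA ⊗[ℂ] HB) where
  inner x y := tensorInner x y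
  conj_inner_symm := tensorInner_conj_symm
  re_inner_nonneg x := by
    obtain ⟨m, w, e, _, h⟩ := tensorInner_self x
    show 0 ≤ (tensorInner x x).re
    rw [h, Complex.ofReal_re]
    positivity
  add_left := tensorInner_add_left
  smul_left x y r := tensorInner_smul_left r x y
  definite x hx := by
    obtain ⟨m, w, e, hdecomp, h⟩ := tensorInner_self x
    have h0 : tensorInner x x = 0 := hx
    rw [h, Complex.ofReal_eq_zero] at h0
    have hz : ∀ j ∈ Finset.univ, ‖w j‖^2 = 0 :=
      (Finset.sum_eq_zero_iff_of_nonneg (fun j _ => by positivity)).mp h0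
    have hw : ∀ j, w j = 0 := fun j => by
      have := hz j (Finset.mem_univ j)
      simpa [pow_eq_zero_iff] using this
    rw [hdecomp]
    simp [hw]

/-- `rTensor` of a symmetric operator is symmetric for `tensorInner`. -/
lemma tensorInner_rTensor (f : HA →ₗ[ℂ] HA)
    (hf : ∀ v w : HA, (inner ℂ (f v) w : ℂ) = inner ℂ v (f w)) (x y : HA ⊗[ℂ] HB) :
    tensorInner (LinearMap.rTensor HB f x) y = tensorInner x (LinearMap.rTensor HB f y) := by
  induction x using TensorProduct.induction_on with
  | zero => simp
  | tmul u v =>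
      induction y using TensorProduct.induction_on with
      | zero => simp
      | tmul u' v' => simp [hf]
      | add y₁ y₂ h1 h2 => rw [map_add, map_add, map_add, h1, h2]
  | add x₁ x₂ h1 h2 =>
      rw [map_add, tensorInner_add_left, map_add tensorInner, LinearMap.add_apply, h1, h2]

lemma tensorInner_lTensor (g : HB →ₗ[ℂ] HB)
    (hg : ∀ v w : HB, (inner ℂ (g v) w : ℂ) = inner ℂ v (g w)) (x y : HA ⊗[ℂ] HB) :
    tensorInner (LinearMap.lTensor HA g x) y = tensorInner x (LinearMap.lTensor HA g y) := by
  induction x using TensorProduct.induction_on with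
  | zero => simp
  | tmul u v =>
      induction y using TensorProduct.induction_on with
      | zero => simp
      | tmul u' v' => simp [hg]
      | add y₁ y₂ h1 h2 => rw [map_add, map_add, map_add, h1, h2]
  | add x₁ x₂ h1 h2 =>
      rw [map_add, tensorInner_add_left, map_add tensorInner, LinearMap.add_apply, h1, h2]

lemma rTensor_sum {ι : Type*} (s : Finset ι) (g : ι → (HA →ₗ[ℂ] HA)) :
    LinearMap.rTensor (R := ℂ) HB (∑ a ∈ s, g a) = ∑ a ∈ s, LinearMap.rTensor HB (g a) := by
  apply TensorProduct.ext'
  intro u v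
  simp [LinearMap.sum_apply, sum_tmul]

lemma lTensor_sum {ι : Type*} (s : Finset ι) (g : ι → (HB →ₗ[ℂ] HB)) :
    LinearMap.lTensor (R := ℂ) HA (∑ a ∈ s, g a) = ∑ a ∈ s, LinearMap.lTensor HA (g a) := by
  apply TensorProduct.ext'
  intro u v
  simp [LinearMap.sum_apply, tmul_sum]

/-! ### Interleaved products of `rTensor` and `lTensor` operators factor. -/

lemma foldr_factor (L : List ((HA →ₗ[ℂ] HA) ⊕ (HB →ₗ[ℂ] HB))) (u : HA) (v : HB) :
    L.foldr (fun s w => Sum.elim (LinearMap.rTensor HB) (LinearMap.lTensor HA) s w) (u ⊗ₜ[ℂ] v)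
      = ((L.filterMap Sum.getLeft?).foldr (fun f w => f w) u) ⊗ₜ[ℂ]
        ((L.filterMap Sum.getRight?).foldr (fun g w => g w) v) := by
  induction L with
  | nil => rfl
  | cons s L ih =>
      cases s with
      | inl f => simp [List.foldr_cons, ih, List.filterMap_cons]
      | inr g => simp [List.foldr_cons, ih, List.filterMap_cons]

/-- extraction of the induced permutation on a sub-block. -/
lemma perm_extract {n m : ℕ} (π : Equiv.Perm (Fin n)) (g : Fin n → Option (Fin m))
    (hg : ∀ i i' j, g i = some j → g i' = some j → i = i')
    (hsur : ∀ j, ∃ i, g i = some j) :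
    ∃ σ : Equiv.Perm (Fin m), (List.ofFn (π : Fin n → Fin n)).filterMap g
      = List.ofFn (σ : Fin m → Fin m) := by
  set l := (List.ofFn (π : Fin n → Fin n)).filterMap g with hl
  have hnd : l.Nodup := by
    refine List.Nodup.filterMap ?_ (List.nodup_ofFn.mpr π.injective)
    intro a a' b h1 h2
    exact hg a a' b h1 h2
  have hmem : ∀ j : Fin m, j ∈ l := by
    intro j
    obtain ⟨i, hi⟩ := hsur j
    rw [hl, List.mem_filterMap]
    exact ⟨i, by rw [List.mem_ofFn]; exact ⟨π.symm i, π.apply_symm_apply i⟩, hi⟩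
  have hlen : l.length = m := by
    have h1 : l.toFinset = Finset.univ := Finset.eq_univ_iff_forall.mpr
      (fun j => List.mem_toFinset.mpr (hmem j))
    have h2 := List.toFinset_card_of_nodup hnd
    rw [h1] at h2
    simpa using h2.symm
  have hinj : Function.Injective (fun j : Fin m => l.get (Fin.cast hlen.symm j)) := by
    intro a b hab
    have := List.nodup_iff_injective_get.mp hnd hab
    simpa [Fin.ext_iff] using this
  refine ⟨Equiv.ofBijective _ (Finite.injective_iff_bijective.mp hinj), ?_⟩
  apply List.ext_get
  · simp [hlen]
  · intro i h1 h2
    simp [Equiv.ofBijective, List.get_ofFn]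

variable {nA nB : ℕ}

def cSum (fA : Fin nA → (HA →ₗ[ℂ] HA)) (fB : Fin nB → (HB →ₗ[ℂ] HB)) :
    Fin (nA + nB) → ((HA →ₗ[ℂ] HA) ⊕ (HB →ₗ[ℂ] HB)) :=
  Fin.addCases (fun i => Sum.inl (fA i)) (fun j => Sum.inr (fB j))

def gA : Fin (nA + nB) → Option (Fin nA) :=
  fun i => if h : (i : ℕ) < nA then some ⟨i, h⟩ else none

def gB : Fin (nA + nB) → Option (Fin nB) :=
  fun i => if h : nA ≤ (i : ℕ) then some ⟨(i : ℕ) - nA, by omega⟩ else none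

lemma getLeft_cSum (fA : Fin nA → (HA →ₗ[ℂ] HA)) (fB : Fin nB → (HB →ₗ[ℂ] HB))
    (i : Fin (nA + nB)) : Sum.getLeft? (cSum fA fB i) = Option.map fA (gA i) := by
  induction i using Fin.addCases with
  | left i => simp [cSum, gA, Fin.addCases_left, i.2]
  | right j => simp [cSum, gB, Fin.addCases_right, gA]

lemma getRight_cSum (fA : Fin nA → (HA →ₗ[ℂ] HA)) (fB : Fin nB → (HB →ₗ[ℂ] HB))
    (i : Fin (nA + nB)) : Sum.getRight? (cSum fA fB i) = Option.map fB (gB i) := by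
  induction i using Fin.addCases with
  | left i => simp [cSum, gB, Fin.addCases_left, i.2, Nat.not_le.mpr i.2]
  | right j => simp [cSum, gB, Fin.addCases_right]

lemma seq_factor (π : Equiv.Perm (Fin (nA + nB))) :
    ∃ (σA : Equiv.Perm (Fin nA)) (σB : Equiv.Perm (Fin nB)),
      ∀ (fA : Fin nA → (HA →ₗ[ℂ] HA)) (fB : Fin nB → (HB →ₗ[ℂ] HB)) (u : HA) (v : HB),
        seqApply (fun i => Sum.elim (LinearMap.rTensor HB) (LinearMap.lTensor HA)
            (cSum fA fB (π i))) (u ⊗ₜ[ℂ] v)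
          = (seqApply (fun i => fA (σA i)) u) ⊗ₜ[ℂ] (seqApply (fun j => fB (σB j)) v) := by
  obtain ⟨σA, hσA⟩ := perm_extract π (gA (nA := nA) (nB := nB))
    (by
      intro a a' b h1 h2
      simp only [gA] at h1 h2
      split_ifs at h1 h2 with h h'
      have e1 : (a : ℕ) = (b : ℕ) := by cases h1; rfl
      have e2 : (a' : ℕ) = (b : ℕ) := by cases h2; rfl
      exact Fin.ext (by omega))
    (by
      intro j
      refine ⟨Fin.castAdd nB j, ?_⟩
      simp [gA, j.2])
  obtain ⟨σB, hσB⟩ := perm_extract π (gB (nA := nA) (nB := nB))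
    (by
      intro a a' b h1 h2
      simp only [gB] at h1 h2
      split_ifs at h1 h2 with h h'
      have e1 : (a : ℕ) - nA = (b : ℕ) := by cases h1; rfl
      have e2 : (a' : ℕ) - nA = (b : ℕ) := by cases h2; rfl
      exact Fin.ext (by omega))
    (by
      intro j
      refine ⟨Fin.natAdd nA j, ?_⟩
      simp [gB])
  refine ⟨σA, σB, ?_⟩
  intro fA fB u v
  set c := cSum fA fB with hc
  have h1 : List.ofFn (fun i => Sum.elim (LinearMap.rTensor HB) (LinearMap.lTensor HA)
      (c (π i))) = ((List.ofFn (π : Fin (nA+nB) → Fin (nA+nB))).map c).map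
        (Sum.elim (LinearMap.rTensor HB) (LinearMap.lTensor HA)) := by
    rw [List.map_ofFn, List.map_ofFn]
    rfl
  simp only [seqApply]
  rw [h1, List.foldr_map, foldr_factor]
  congr 1
  · rw [List.filterMap_map]
    have h2 : Sum.getLeft? ∘ c = fun i => Option.map fA (gA i) :=
      funext (getLeft_cSum fA fB)
    rw [h2, ← List.map_filterMap, hσA, List.map_ofFn]
    rfl
  · rw [List.filterMap_map]
    have h2 : Sum.getRight? ∘ c = fun i => Option.map fB (gB i) :=
      funext (getRight_cSum fA fB)
    rw [h2, ← List.map_filterMap, hσB, List.map_ofFn]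
    rfl

end AQTensor

noncomputable section

attribute [-instance] TensorProduct.instInner TensorProduct.instNormedAddCommGroup TensorProduct.instInnerProductSpace

/-- the almost quantum set is closed under composition: the product of two
independent almost quantum boxes (on `n_A` and `n_B` parties respectively) is an
`(n_A + n_B)`-partite almost quantum box. -/
theorem almostQuantum_closed_composition
    {nA nB : ℕ} {A X : Type*} [Fintype A]
    (PA : (Fin nA → A) → (Fin nA → X) → ℝ)
    (PB : (Fin nB → A) → (Fin nB → X) → ℝ)
    (hA : IsAlmostQuantum PA) (hB : IsAlmostQuantum PB) :
    IsAlmostQuantum (fun (a : Fin (nA + nB) → A) (x : Fin (nA + nB) → X) =>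
      PA (fun i => a (Fin.castAdd nB i)) (fun i => x (Fin.castAdd nB i)) *
        PB (fun j => a (Fin.natAdd nA j)) (fun j => x (Fin.natAdd nA j))) := by
  obtain ⟨RA⟩ := hA
  obtain ⟨RB⟩ := hB
  letI := RA.instN; letI := RA.instI; letI := RB.instN; letI := RB.instI
  letI : NormedAddCommGroup (RA.H ⊗[ℂ] RB.H) :=
    @InnerProductSpace.Core.toNormedAddCommGroup ℂ _ _ _ _ tensorCore
  letI : InnerProductSpace ℂ (RA.H ⊗[ℂ] RB.H) := InnerProductSpace.ofCore tensorCore.toCore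
  have hInner : ∀ x y : RA.H ⊗[ℂ] RB.H, (inner ℂ x y : ℂ) = tensorInner x y := fun _ _ => rfl
  set Ec : Fin (nA + nB) → A → X → ((RA.H ⊗[ℂ] RB.H) →ₗ[ℂ] (RA.H ⊗[ℂ] RB.H)) :=
    fun k a x => Sum.elim (LinearMap.rTensor RB.H) (LinearMap.lTensor RA.H)
      (cSum (fun i => RA.E i a x) (fun j => RB.E j a x) k) with hEc
  have hEcL : ∀ (i : Fin nA) a x,
      Ec (Fin.castAdd nB i) a x = LinearMap.rTensor RB.H (RA.E i a x) := by
    intro i a x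
    simp [hEc, cSum, Fin.addCases_left]
  have hEcR : ∀ (j : Fin nB) a x,
      Ec (Fin.natAdd nA j) a x = LinearMap.lTensor RA.H (RB.E j a x) := by
    intro j a x
    simp [hEc, cSum, Fin.addCases_right]
  refine ⟨{
    H := RA.H ⊗[ℂ] RB.H
    φ := RA.φ ⊗ₜ[ℂ] RB.φ
    E := Ec
    norm_φ := ?_
    idem := ?_
    selfAdj := ?_
    complete := ?_
    perm := ?_
    prob := ?_ }⟩
  · -- norm
    have h2 : (inner ℂ (RA.φ ⊗ₜ[ℂ] RB.φ) (RA.φ ⊗ₜ[ℂ] RB.φ) : ℂ) = 1 := by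
      rw [hInner, tensorInner_tmul, inner_self_eq_norm_sq_to_K, inner_self_eq_norm_sq_to_K,
        RA.norm_φ, RB.norm_φ]
      norm_num
    have h3 : ‖RA.φ ⊗ₜ[ℂ] RB.φ‖ ^ 2 = 1 := by
      rw [← inner_self_eq_norm_sq (𝕜 := ℂ) (RA.φ ⊗ₜ[ℂ] RB.φ), h2]
      norm_num
    nlinarith [norm_nonneg (RA.φ ⊗ₜ[ℂ] RB.φ)]
  · -- idem
    intro k a x
    induction k using Fin.addCases with
    | left i =>
        rw [hEcL, ← LinearMap.rTensor_comp, RA.idem]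
    | right j =>
        rw [hEcR, ← LinearMap.lTensor_comp, RB.idem]
  · -- selfAdj
    intro k a x v w
    rw [hInner, hInner]
    induction k using Fin.addCases with
    | left i =>
        rw [hEcL]
        exact tensorInner_rTensor _ (RA.selfAdj i a x) v w
    | right j =>
        rw [hEcR]
        exact tensorInner_lTensor _ (RB.selfAdj j a x) v w
  · -- complete
    intro k x
    induction k using Fin.addCases with
    | left i =>
        have : ∀ a, Ec (Fin.castAdd nB i) a x = LinearMap.rTensor RB.H (RA.E i a x) :=
          fun a => hEcL i a x
        simp only [this]
        rw [← rTensor_sum, RA.complete, LinearMap.rTensor_id]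
    | right j =>
        have : ∀ a, Ec (Fin.natAdd nA j) a x = LinearMap.lTensor RA.H (RB.E j a x) :=
          fun a => hEcR j a x
        simp only [this]
        rw [← lTensor_sum, RB.complete, LinearMap.lTensor_id]
  · -- perm
    intro a x π
    set aA : Fin nA → A := fun i => a (Fin.castAdd nB i) with haA
    set xA : Fin nA → X := fun i => x (Fin.castAdd nB i) with hxA
    set aB : Fin nB → A := fun j => a (Fin.natAdd nA j) with haB
    set xB : Fin nB → X := fun j => x (Fin.natAdd nA j) with hxB
    set fA : Fin nA → (RA.H →ₗ[ℂ] RA.H) := fun i => RA.E i (aA i) (xA i) with hfA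
    set fB : Fin nB → (RB.H →ₗ[ℂ] RB.H) := fun j => RB.E j (aB j) (xB j) with hfB
    have hfun : ∀ k, Ec k (a k) (x k)
        = Sum.elim (LinearMap.rTensor RB.H) (LinearMap.lTensor RA.H) (cSum fA fB k) := by
      intro k
      induction k using Fin.addCases with
      | left i => rw [hEcL]; simp [cSum, Fin.addCases_left, hfA]; rfl
      | right j => rw [hEcR]; simp [cSum, Fin.addCases_right, hfB]; rfl
    obtain ⟨σA, σB, hfac⟩ := seq_factor (HA := RA.H) (HB := RB.H) π
    obtain ⟨τA, τB, hfac1⟩ := seq_factor (HA := RA.H) (HB := RB.H) (Equiv.refl (Fin (nA + nB)))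
    have e1 : seqApply (fun i => fA (σA i)) RA.φ = seqApply (fun i => fA i) RA.φ :=
      RA.perm aA xA σA
    have e2 : seqApply (fun j => fB (σB j)) RB.φ = seqApply (fun j => fB j) RB.φ :=
      RB.perm aB xB σB
    have e3 : seqApply (fun i => fA (τA i)) RA.φ = seqApply (fun i => fA i) RA.φ :=
      RA.perm aA xA τA
    have e4 : seqApply (fun j => fB (τB j)) RB.φ = seqApply (fun j => fB j) RB.φ :=
      RB.perm aB xB τB
    calc seqApply (fun i => Ec (π i) (a (π i)) (x (π i))) (RA.φ ⊗ₜ[ℂ] RB.φ)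
        = seqApply (fun i => Sum.elim (LinearMap.rTensor RB.H) (LinearMap.lTensor RA.H)
            (cSum fA fB (π i))) (RA.φ ⊗ₜ[ℂ] RB.φ) := by
          simp only [hfun]
      _ = (seqApply (fun i => fA (σA i)) RA.φ) ⊗ₜ[ℂ] (seqApply (fun j => fB (σB j)) RB.φ) :=
          hfac fA fB RA.φ RB.φ
      _ = (seqApply (fun i => fA i) RA.φ) ⊗ₜ[ℂ] (seqApply (fun j => fB j) RB.φ) := by
          rw [e1, e2]
      _ = (seqApply (fun i => fA (τA i)) RA.φ) ⊗ₜ[ℂ] (seqApply (fun j => fB (τB j)) RB.φ) := by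
          rw [e3, e4]
      _ = seqApply (fun i => Sum.elim (LinearMap.rTensor RB.H) (LinearMap.lTensor RA.H)
            (cSum fA fB ((Equiv.refl (Fin (nA + nB))) i))) (RA.φ ⊗ₜ[ℂ] RB.φ) :=
          (hfac1 fA fB RA.φ RB.φ).symm
      _ = seqApply (fun i => Ec i (a i) (x i)) (RA.φ ⊗ₜ[ℂ] RB.φ) := by
          simp only [Equiv.refl_apply, hfun]
  · -- prob
    intro a x
    set aA : Fin nA → A := fun i => a (Fin.castAdd nB i) with haA
    set xA : Fin nA → X := fun i => x (Fin.castAdd nB i) with hxA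
    set aB : Fin nB → A := fun j => a (Fin.natAdd nA j) with haB
    set xB : Fin nB → X := fun j => x (Fin.natAdd nA j) with hxB
    set fA : Fin nA → (RA.H →ₗ[ℂ] RA.H) := fun i => RA.E i (aA i) (xA i) with hfA
    set fB : Fin nB → (RB.H →ₗ[ℂ] RB.H) := fun j => RB.E j (aB j) (xB j) with hfB
    have hfun : ∀ k, Ec k (a k) (x k)
        = Sum.elim (LinearMap.rTensor RB.H) (LinearMap.lTensor RA.H) (cSum fA fB k) := by
      intro k
      induction k using Fin.addCases with
      | left i => rw [hEcL]; simp [cSum, Fin.addCases_left, hfA]; rfl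
      | right j => rw [hEcR]; simp [cSum, Fin.addCases_right, hfB]; rfl
    obtain ⟨τA, τB, hfac1⟩ := seq_factor (HA := RA.H) (HB := RB.H) (Equiv.refl (Fin (nA + nB)))
    have e3 : seqApply (fun i => fA (τA i)) RA.φ = seqApply (fun i => fA i) RA.φ :=
      RA.perm aA xA τA
    have e4 : seqApply (fun j => fB (τB j)) RB.φ = seqApply (fun j => fB j) RB.φ :=
      RB.perm aB xB τB
    have hA1 : (PA aA xA : ℂ) = inner ℂ RA.φ (seqApply (fun i => fA i) RA.φ) := RA.prob aA xA
    have hB1 : (PB aB xB : ℂ) = inner ℂ RB.φ (seqApply (fun j => fB j) RB.φ) := RB.prob aB xB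
    have hseq : seqApply (fun i => Ec i (a i) (x i)) (RA.φ ⊗ₜ[ℂ] RB.φ)
        = (seqApply (fun i => fA i) RA.φ) ⊗ₜ[ℂ] (seqApply (fun j => fB j) RB.φ) := by
      calc seqApply (fun i => Ec i (a i) (x i)) (RA.φ ⊗ₜ[ℂ] RB.φ)
          = seqApply (fun i => Sum.elim (LinearMap.rTensor RB.H) (LinearMap.lTensor RA.H)
              (cSum fA fB ((Equiv.refl (Fin (nA + nB))) i))) (RA.φ ⊗ₜ[ℂ] RB.φ) := by
            simp only [Equiv.refl_apply, hfun]
        _ = (seqApply (fun i => fA (τA i)) RA.φ) ⊗ₜ[ℂ] (seqApply (fun j => fB (τB j)) RB.φ) :=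
            hfac1 fA fB RA.φ RB.φ
        _ = _ := by rw [e3, e4]
    rw [hseq, hInner, tensorInner_tmul, ← hA1, ← hB1]
    push_cast
    ring
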